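/- Let (𝔛, μ) be a measure space, and let n ≥ 1, m ≥ 2 be integers. Let g : {1,…,n} × 𝔛 → ℂ and h_r : 𝔛 × 𝔛 → ℂ (r = 1,…,m−1) be measurable functions, and assume all iterated integrals appearing below converge absolutely. Define φ(i,y) = ∫_{𝔛^{m−1}} g(i,t_1) h_1(t_1,t_2) ⋯ h_{m−2}(t_{m−2},t_{m−1}) h_{m−1}(t_{m−1},y) dμ(t_1)⋯dμ(t_{m−1}). Then for every x^m = (x_1^m,…,x_n^m) ∈ 𝔛^n: ∫_{𝔛^{n(m−1)}} det[g(i, x_j^1)]_{i,j=1}^n · ∏_{r=1}^{m−1} det[h_r(x_i^r, x_j^{r+1})]_{i,j=1}^n dμ^{⊗n}(x^1)⋯dμ^{⊗n}(x^{m−1}) = (n!)^{m−1} det[φ(i, x_j^m)]_{i,j=1}^n. -/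

import Mathlib

open MeasureTheory Finset

/-- The one-step transition chain `h_1(t_1,t_2)⋯h_{m−2}(t_{m−2},t_{m−1})h_{m−1}(t_{m−1},y)`,
as a product over `r : Fin (m-1)` where the second argument of the last factor is `y`. -/
noncomputable def transChain {X : Type*} (m : ℕ) (h : Fin (m - 1) → X → X → ℂ)
    (t : Fin (m - 1) → X) (y : X) : ℂ :=
  ∏ r : Fin (m - 1),
    h r (t r) (if hr : (r : ℕ) + 1 < m - 1 then t ⟨(r : ℕ) + 1, hr⟩ else y)

/-- `φ(i,y) = ∫_{X^{m−1}} g(i,t_1) h_1(t_1,t_2)⋯h_{m−1}(t_{m−1},y) dμ(t_1)⋯dμ(t_{m−1})`. -/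
noncomputable def phiConv {X : Type*} [MeasurableSpace X] (μ : Measure X) [SigmaFinite μ]
    (n m : ℕ) (hm : 2 ≤ m) (g : Fin n → X → ℂ) (h : Fin (m - 1) → X → X → ℂ)
    (i : Fin n) (y : X) : ℂ :=
  ∫ t : Fin (m - 1) → X, g i (t ⟨0, by omega⟩) * transChain m h t y
    ∂(Measure.pi fun _ => μ)

namespace IterAndreief

/-! ### Measure-theoretic preliminaries -/

variable {X : Type*} [MeasurableSpace X]

/-- The uncurrying measurable equivalence. -/
def uncurryME (ι κ : Type*) (X : Type*) [MeasurableSpace X] :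
    (ι → κ → X) ≃ᵐ (ι × κ → X) where
  toEquiv := (Equiv.curry ι κ X).symm
  measurable_toFun := measurable_pi_lambda _ fun p =>
    (measurable_pi_apply p.2).comp (measurable_pi_apply p.1)
  measurable_invFun := measurable_pi_lambda _ fun r =>
    measurable_pi_lambda _ fun j => measurable_pi_apply (r, j)

lemma measurePreserving_uncurryME (ι κ : Type*) [Fintype ι] [Fintype κ]
    (μ : Measure X) [SigmaFinite μ] :
    MeasurePreserving (uncurryME ι κ X)
      (Measure.pi fun _ : ι => Measure.pi fun _ : κ => μ)
      (Measure.pi fun _ : ι × κ => μ) := by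
  refine ⟨(uncurryME ι κ X).measurable, ?_⟩
  refine (Measure.pi_eq fun s hs => ?_).symm
  rw [MeasurableEquiv.map_apply]
  have hpre : (uncurryME ι κ X) ⁻¹' (Set.pi Set.univ s)
      = Set.pi Set.univ (fun r : ι => Set.pi Set.univ fun j : κ => s (r, j)) := by
    ext x
    simp only [Set.mem_preimage, Set.mem_pi, Set.mem_univ, forall_true_left, Prod.forall]
    rfl
  rw [hpre, Measure.pi_pi]
  simp_rw [Measure.pi_pi]
  rw [← Fintype.prod_prod_type']

/-- Transposition of a doubly-indexed family, as a measurable equivalence. -/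
def transposeME (ι κ : Type*) (X : Type*) [MeasurableSpace X] :
    (ι → κ → X) ≃ᵐ (κ → ι → X) :=
  (uncurryME ι κ X).trans
    ((MeasurableEquiv.piCongrLeft (fun _ : κ × ι => X) (Equiv.prodComm ι κ)).trans
      (uncurryME κ ι X).symm)

lemma transposeME_apply (ι κ : Type*) (x : ι → κ → X) (j : κ) (r : ι) :
    transposeME ι κ X x j r = x r j := by
  show (MeasurableEquiv.piCongrLeft (fun _ : κ × ι => X) (Equiv.prodComm ι κ)
      (fun p : ι × κ => x p.1 p.2)) ((Equiv.prodComm ι κ) (r, j)) = x r j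
  rw [MeasurableEquiv.piCongrLeft_apply_apply]

lemma measurePreserving_transposeME (ι κ : Type*) [Fintype ι] [Fintype κ]
    (μ : Measure X) [SigmaFinite μ] :
    MeasurePreserving (transposeME ι κ X)
      (Measure.pi fun _ : ι => Measure.pi fun _ : κ => μ)
      (Measure.pi fun _ : κ => Measure.pi fun _ : ι => μ) :=
  (((measurePreserving_uncurryME κ ι μ).symm _).comp
    (MeasureTheory.measurePreserving_piCongrLeft (fun _ : κ × ι => μ) (Equiv.prodComm ι κ))).comp
    (measurePreserving_uncurryME ι κ μ)

/-- The twisted transpose `x ↦ fun j r => x r (P r j)` as a measurable equivalence. -/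
def twistME (k n : ℕ) (X : Type*) [MeasurableSpace X] (P : Fin k → Equiv.Perm (Fin n)) :
    (Fin k → Fin n → X) ≃ᵐ (Fin n → Fin k → X) :=
  (MeasurableEquiv.piCongrRight fun r =>
      MeasurableEquiv.piCongrLeft (fun _ : Fin n => X) (P r).symm).trans
    (transposeME (Fin k) (Fin n) X)

lemma twistME_apply {k n : ℕ} (P : Fin k → Equiv.Perm (Fin n))
    (x : Fin k → Fin n → X) (j : Fin n) (r : Fin k) :
    twistME k n X P x j r = x r (P r j) := by
  rw [twistME, MeasurableEquiv.trans_apply, transposeME_apply]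
  show MeasurableEquiv.piCongrLeft (fun _ : Fin n => X) (P r).symm (x r) j = _
  have := MeasurableEquiv.piCongrLeft_apply_apply (β := fun _ : Fin n => X)
    ((P r).symm) (x r) ((P r) j)
  simpa using this

lemma measurePreserving_twistME (k n : ℕ) (μ : Measure X) [SigmaFinite μ]
    (P : Fin k → Equiv.Perm (Fin n)) :
    MeasurePreserving (twistME k n X P)
      (Measure.pi fun _ : Fin k => Measure.pi fun _ : Fin n => μ)
      (Measure.pi fun _ : Fin n => Measure.pi fun _ : Fin k => μ) := by
  refine (measurePreserving_transposeME _ _ μ).comp ?_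
  exact MeasureTheory.measurePreserving_pi _ _ fun r =>
    MeasureTheory.measurePreserving_piCongrLeft (fun _ : Fin n => μ) (P r).symm

lemma integral_twist_prod {k n : ℕ} (μ : Measure X) [SigmaFinite μ]
    (F : Fin n → (Fin k → X) → ℂ) (P : Fin k → Equiv.Perm (Fin n)) :
    ∫ x : Fin k → Fin n → X, ∏ j, F j (fun r => x r (P r j))
        ∂(Measure.pi fun _ => Measure.pi fun _ => μ)
      = ∏ j, ∫ t : Fin k → X, F j t ∂(Measure.pi fun _ => μ) := by
  letI : MeasureSpace X := ⟨μ⟩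
  have h1 : (fun x : Fin k → Fin n → X => ∏ j, F j (fun r => x r (P r j)))
      = fun x => (fun y : Fin n → Fin k → X => ∏ j, F j (y j)) ((twistME k n X P) x) := by
    funext x
    refine Finset.prod_congr rfl fun j _ => ?_
    congr 1
    funext r
    rw [twistME_apply]
  rw [h1, (measurePreserving_twistME k n μ P).integral_comp'
    (fun y : Fin n → Fin k → X => ∏ j, F j (y j))]
  have hv : (Measure.pi fun _ : Fin n => Measure.pi fun _ : Fin k => μ)
      = (volume : Measure (Fin n → Fin k → X)) := rfl
  have hv2 : (Measure.pi fun _ : Fin k => μ) = (volume : Measure (Fin k → X)) := rfl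
  rw [hv]
  simp_rw [hv2]
  exact MeasureTheory.integral_fintype_prod_eq_prod (𝕜 := ℂ) (ι := Fin n)
    (E := fun _ => Fin k → X) (f := fun j t => F j t)

lemma integrable_twist_prod {k n : ℕ} (μ : Measure X) [SigmaFinite μ]
    {F : Fin n → (Fin k → X) → ℂ} (hF : ∀ j, Integrable (F j) (Measure.pi fun _ => μ))
    (P : Fin k → Equiv.Perm (Fin n)) :
    Integrable (fun x : Fin k → Fin n → X => ∏ j, F j (fun r => x r (P r j)))
      (Measure.pi fun _ => Measure.pi fun _ => μ) := by
  letI : MeasureSpace X := ⟨μ⟩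
  have h1 : (fun x : Fin k → Fin n → X => ∏ j, F j (fun r => x r (P r j)))
      = (fun y : Fin n → Fin k → X => ∏ j, F j (y j)) ∘ (twistME k n X P) := by
    funext x
    simp only [Function.comp_apply]
    refine Finset.prod_congr rfl fun j _ => ?_
    congr 1
    funext r
    rw [twistME_apply]
  rw [h1]
  rw [(measurePreserving_twistME k n μ P).integrable_comp_emb
    (twistME k n X P).measurableEmbedding]
  have hv : (Measure.pi fun _ : Fin n => Measure.pi fun _ : Fin k => μ)
      = (volume : Measure (Fin n → Fin k → X)) := rfl
  rw [hv]
  exact Integrable.fintype_prod (f := fun j t => F j t) fun j => hF j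

/-! ### Combinatorial preliminaries -/

/-- `pathPerm k τ r = τ r * τ (r+1) * ⋯ * τ (k-1)`. -/
def pathPerm {n : ℕ} (k : ℕ) (τ : Fin k → Equiv.Perm (Fin n)) (r : Fin k) :
    Equiv.Perm (Fin n) :=
  ((List.ofFn τ).drop r).prod

lemma pathPerm_eq {n k : ℕ} (τ : Fin k → Equiv.Perm (Fin n)) (r : Fin k) :
    pathPerm k τ r
      = τ r * (if hr : (r : ℕ) + 1 < k then pathPerm k τ ⟨(r : ℕ) + 1, hr⟩ else 1) := by
  unfold pathPerm
  have hr' : (r : ℕ) < (List.ofFn τ).length := by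
    rw [List.length_ofFn]; exact r.isLt
  rw [List.drop_eq_getElem_cons hr', List.prod_cons, List.getElem_ofFn]
  simp only [Fin.eta]
  congr 1
  by_cases hr : (r : ℕ) + 1 < k
  · rw [dif_pos hr]
  · rw [dif_neg hr]
    have : (List.ofFn τ).length ≤ (r : ℕ) + 1 := by
      rw [List.length_ofFn]; omega
    rw [List.drop_eq_nil_of_le this, List.prod_nil]

lemma pathPerm_apply_succ {n k : ℕ} (τ : Fin k → Equiv.Perm (Fin n)) (r : Fin k)
    (hr : (r : ℕ) + 1 < k) (j : Fin n) :
    pathPerm k τ r j = τ r (pathPerm k τ ⟨(r : ℕ) + 1, hr⟩ j) := by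
  rw [pathPerm_eq τ r, dif_pos hr]; rfl

lemma pathPerm_apply_last {n k : ℕ} (τ : Fin k → Equiv.Perm (Fin n)) (r : Fin k)
    (hr : ¬ ((r : ℕ) + 1 < k)) (j : Fin n) :
    pathPerm k τ r j = τ r j := by
  rw [pathPerm_eq τ r, dif_neg hr, mul_one]

lemma sign_pathPerm_zero {n k : ℕ} (hk : 0 < k) (τ : Fin k → Equiv.Perm (Fin n)) :
    Equiv.Perm.sign (pathPerm k τ ⟨0, hk⟩) = ∏ r, Equiv.Perm.sign (τ r) := by
  unfold pathPerm
  rw [show ((⟨0, hk⟩ : Fin k) : ℕ) = 0 from rfl, List.drop_zero,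
    ← List.prod_ofFn (f := fun r => Equiv.Perm.sign (τ r))]
  have h2 : (List.ofFn fun r => Equiv.Perm.sign (τ r)) = (List.ofFn τ).map Equiv.Perm.sign := by
    rw [List.map_ofFn]; rfl
  rw [h2, (Equiv.Perm.sign).map_list_prod]

lemma regroup {X : Type*} {k n : ℕ} (hk : 0 < k) (g : Fin n → X → ℂ)
    (h : Fin k → X → X → ℂ) (xm : Fin n → X) (σ : Equiv.Perm (Fin n))
    (τ : Fin k → Equiv.Perm (Fin n)) (x : Fin k → Fin n → X) :
    (∏ j, g (σ j) (x ⟨0, hk⟩ j)) *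
      ∏ r : Fin k, ∏ j, h r (x r (τ r j))
        (if hr : (r : ℕ) + 1 < k then x ⟨(r : ℕ) + 1, hr⟩ j else xm j)
    = ∏ j, (g (σ (pathPerm k τ ⟨0, hk⟩ j)) (x ⟨0, hk⟩ (pathPerm k τ ⟨0, hk⟩ j)) *
        ∏ r : Fin k, h r (x r (pathPerm k τ r j))
          (if hr : (r : ℕ) + 1 < k then x ⟨(r : ℕ) + 1, hr⟩ (pathPerm k τ ⟨(r : ℕ) + 1, hr⟩ j)
           else xm j)) := by
  rw [Finset.prod_mul_distrib]
  congr 1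
  · exact (Equiv.prod_comp (pathPerm k τ ⟨0, hk⟩) (fun j => g (σ j) (x ⟨0, hk⟩ j))).symm
  · conv_rhs => rw [Finset.prod_comm]
    refine Finset.prod_congr rfl fun r _ => ?_
    by_cases hr : (r : ℕ) + 1 < k
    · simp only [dif_pos hr]
      calc ∏ j, h r (x r (τ r j)) (x ⟨(r : ℕ) + 1, hr⟩ j)
          = ∏ j, (fun j' => h r (x r (τ r j')) (x ⟨(r : ℕ) + 1, hr⟩ j'))
              (pathPerm k τ ⟨(r : ℕ) + 1, hr⟩ j) :=
            (Equiv.prod_comp (pathPerm k τ ⟨(r : ℕ) + 1, hr⟩) _).symm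
        _ = ∏ j, h r (x r (pathPerm k τ r j))
              (x ⟨(r : ℕ) + 1, hr⟩ (pathPerm k τ ⟨(r : ℕ) + 1, hr⟩ j)) := by
            refine Finset.prod_congr rfl fun j _ => ?_
            rw [pathPerm_apply_succ τ r hr]
    · simp only [dif_neg hr]
      refine Finset.prod_congr rfl fun j _ => ?_
      rw [pathPerm_apply_last τ r hr]

lemma expand_integrand {X : Type*} {k n : ℕ} (hk : 0 < k) (g : Fin n → X → ℂ)
    (h : Fin k → X → X → ℂ) (xm : Fin n → X) (x : Fin k → Fin n → X) :
    (Matrix.of fun i j : Fin n => g i (x ⟨0, hk⟩ j)).det *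
      ∏ r : Fin k, (Matrix.of fun i j : Fin n =>
          h r (x r i) (if hr : (r : ℕ) + 1 < k then x ⟨(r : ℕ) + 1, hr⟩ j else xm j)).det
    = ∑ σ : Equiv.Perm (Fin n), ∑ τ : Fin k → Equiv.Perm (Fin n),
        ((((Equiv.Perm.sign σ : ℤ) : ℂ)) * ∏ r, (((Equiv.Perm.sign (τ r) : ℤ) : ℂ))) *
          ∏ j, (g (σ (pathPerm k τ ⟨0, hk⟩ j)) (x ⟨0, hk⟩ (pathPerm k τ ⟨0, hk⟩ j)) *
            ∏ r : Fin k, h r (x r (pathPerm k τ r j))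
              (if hr : (r : ℕ) + 1 < k then
                x ⟨(r : ℕ) + 1, hr⟩ (pathPerm k τ ⟨(r : ℕ) + 1, hr⟩ j)
               else xm j)) := by
  simp_rw [Matrix.det_apply', Matrix.of_apply]
  rw [Finset.prod_univ_sum, Finset.sum_mul_sum]
  rw [Fintype.piFinset_univ]
  refine Finset.sum_congr rfl fun σ _ => Finset.sum_congr rfl fun τ _ => ?_
  rw [Finset.prod_mul_distrib, mul_mul_mul_comm]
  congr 1
  exact regroup hk g h xm σ τ x

lemma sum_part {n k : ℕ} (hk : 0 < k) (φM : Fin n → Fin n → ℂ) :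
    (∑ σ : Equiv.Perm (Fin n), ∑ τ : Fin k → Equiv.Perm (Fin n),
        (((Equiv.Perm.sign σ : ℤ) : ℂ) * ∏ r, ((Equiv.Perm.sign (τ r) : ℤ) : ℂ)) *
          ∏ j, φM (σ (pathPerm k τ ⟨0, hk⟩ j)) j)
      = ((n.factorial : ℂ)) ^ k * (Matrix.of φM).det := by
  rw [Finset.sum_comm]
  have inner : ∀ τ : Fin k → Equiv.Perm (Fin n),
      (∑ σ : Equiv.Perm (Fin n),
        (((Equiv.Perm.sign σ : ℤ) : ℂ) * ∏ r, ((Equiv.Perm.sign (τ r) : ℤ) : ℂ)) *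
          ∏ j, φM (σ (pathPerm k τ ⟨0, hk⟩ j)) j)
      = (Matrix.of φM).det := by
    intro τ
    set π := pathPerm k τ ⟨0, hk⟩ with hπ
    have hsign : (∏ r, ((Equiv.Perm.sign (τ r) : ℤ) : ℂ)) = ((Equiv.Perm.sign π : ℤ) : ℂ) := by
      rw [hπ, sign_pathPerm_zero hk τ, Units.coe_prod, Int.cast_prod]
    simp_rw [hsign]
    rw [Matrix.det_apply']
    refine Fintype.sum_equiv (Equiv.mulRight π) _ _ fun β => ?_
    simp only [Equiv.coe_mulRight, Matrix.of_apply, Equiv.Perm.mul_apply,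
      Equiv.Perm.sign_mul, Units.val_mul, Int.cast_mul]
  simp_rw [inner]
  rw [Finset.sum_const]
  simp only [Finset.card_univ, nsmul_eq_mul]
  congr 1
  simp [Fintype.card_fun, Fintype.card_perm, Fintype.card_fin]

end IterAndreief

open IterAndreief

/-- Iterated Andréief identity: integrating out the first `m−1` levels of a product of
determinants of one-step transition functions gives `(n!)^{m−1} det[φ(i, x_j^m)]`. -/
theorem iterated_andreief {X : Type*} [MeasurableSpace X] (μ : Measure X) [SigmaFinite μ]
    (n m : ℕ) (hn : 1 ≤ n) (hm : 2 ≤ m)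
    (g : Fin n → X → ℂ) (h : Fin (m - 1) → X → X → ℂ)
    (hg : ∀ i, Measurable (g i)) (hh : ∀ r, Measurable (Function.uncurry (h r)))
    (hφ : ∀ (i : Fin n) (y : X),
      Integrable (fun t : Fin (m - 1) → X => g i (t ⟨0, by omega⟩) * transChain m h t y)
        (Measure.pi fun _ => μ))
    (xm : Fin n → X)
    (hL : Integrable
      (fun x : Fin (m - 1) → Fin n → X =>
        (Matrix.of fun i j : Fin n => g i (x ⟨0, by omega⟩ j)).det *
          ∏ r : Fin (m - 1),
            (Matrix.of fun i j : Fin n =>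
              h r (x r i) (if hr : (r : ℕ) + 1 < m - 1 then x ⟨(r : ℕ) + 1, hr⟩ j else xm j)).det)
      (Measure.pi fun _ => Measure.pi fun _ => μ)) :
    (∫ x : Fin (m - 1) → Fin n → X,
        (Matrix.of fun i j : Fin n => g i (x ⟨0, by omega⟩ j)).det *
          ∏ r : Fin (m - 1),
            (Matrix.of fun i j : Fin n =>
              h r (x r i) (if hr : (r : ℕ) + 1 < m - 1 then x ⟨(r : ℕ) + 1, hr⟩ j else xm j)).det
        ∂(Measure.pi fun _ => Measure.pi fun _ => μ))
      = ((n.factorial : ℂ)) ^ (m - 1) *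
        (Matrix.of fun i j : Fin n => phiConv μ n m hm g h i (xm j)).det := by
  have hk : 0 < m - 1 := by omega
  -- integrability of each expanded term
  have hInt : ∀ (σ : Equiv.Perm (Fin n)) (τ : Fin (m - 1) → Equiv.Perm (Fin n)),
      Integrable (fun x : Fin (m - 1) → Fin n → X =>
        (((Equiv.Perm.sign σ : ℤ) : ℂ) * ∏ r, ((Equiv.Perm.sign (τ r) : ℤ) : ℂ)) *
          ∏ j, (fun t : Fin (m - 1) → X =>
              g (σ (pathPerm (m - 1) τ ⟨0, hk⟩ j)) (t ⟨0, hk⟩) * transChain m h t (xm j))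
            (fun r => x r (pathPerm (m - 1) τ r j)))
        (Measure.pi fun _ => Measure.pi fun _ => μ) := by
    intro σ τ
    exact (integrable_twist_prod μ
      (F := fun j (t : Fin (m - 1) → X) =>
        g (σ (pathPerm (m - 1) τ ⟨0, hk⟩ j)) (t ⟨0, hk⟩) * transChain m h t (xm j))
      (fun j => hφ _ _) (pathPerm (m - 1) τ)).const_mul _
  calc
    (∫ x : Fin (m - 1) → Fin n → X,
        (Matrix.of fun i j : Fin n => g i (x ⟨0, by omega⟩ j)).det *
          ∏ r : Fin (m - 1),
            (Matrix.of fun i j : Fin n =>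
              h r (x r i) (if hr : (r : ℕ) + 1 < m - 1 then x ⟨(r : ℕ) + 1, hr⟩ j else xm j)).det
        ∂(Measure.pi fun _ => Measure.pi fun _ => μ))
      = ∫ x : Fin (m - 1) → Fin n → X,
          ∑ σ : Equiv.Perm (Fin n), ∑ τ : Fin (m - 1) → Equiv.Perm (Fin n),
            (((Equiv.Perm.sign σ : ℤ) : ℂ) * ∏ r, ((Equiv.Perm.sign (τ r) : ℤ) : ℂ)) *
              ∏ j, (fun t : Fin (m - 1) → X =>
                  g (σ (pathPerm (m - 1) τ ⟨0, hk⟩ j)) (t ⟨0, hk⟩) * transChain m h t (xm j))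
                (fun r => x r (pathPerm (m - 1) τ r j))
          ∂(Measure.pi fun _ => Measure.pi fun _ => μ) := by
        refine congrArg (integral _) (funext fun x => ?_)
        rw [expand_integrand hk g h xm x]
        rfl
    _ = ∑ σ : Equiv.Perm (Fin n), ∑ τ : Fin (m - 1) → Equiv.Perm (Fin n),
          (((Equiv.Perm.sign σ : ℤ) : ℂ) * ∏ r, ((Equiv.Perm.sign (τ r) : ℤ) : ℂ)) *
            ∫ x : Fin (m - 1) → Fin n → X,
              ∏ j, (fun t : Fin (m - 1) → X =>
                  g (σ (pathPerm (m - 1) τ ⟨0, hk⟩ j)) (t ⟨0, hk⟩) * transChain m h t (xm j))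
                (fun r => x r (pathPerm (m - 1) τ r j))
              ∂(Measure.pi fun _ => Measure.pi fun _ => μ) := by
        rw [integral_finset_sum _ fun σ _ => integrable_finset_sum _ fun τ _ => hInt σ τ]
        refine Finset.sum_congr rfl fun σ _ => ?_
        rw [integral_finset_sum _ fun τ _ => hInt σ τ]
        refine Finset.sum_congr rfl fun τ _ => ?_
        exact integral_const_mul _ _
    _ = ∑ σ : Equiv.Perm (Fin n), ∑ τ : Fin (m - 1) → Equiv.Perm (Fin n),
          (((Equiv.Perm.sign σ : ℤ) : ℂ) * ∏ r, ((Equiv.Perm.sign (τ r) : ℤ) : ℂ)) *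
            ∏ j, phiConv μ n m hm g h (σ (pathPerm (m - 1) τ ⟨0, hk⟩ j)) (xm j) := by
        refine Finset.sum_congr rfl fun σ _ => Finset.sum_congr rfl fun τ _ => ?_
        congr 1
        rw [integral_twist_prod μ
          (fun j (t : Fin (m - 1) → X) =>
            g (σ (pathPerm (m - 1) τ ⟨0, hk⟩ j)) (t ⟨0, hk⟩) * transChain m h t (xm j))
          (pathPerm (m - 1) τ)]
        rfl
    _ = ((n.factorial : ℂ)) ^ (m - 1) *
        (Matrix.of fun i j : Fin n => phiConv μ n m hm g h i (xm j)).det :=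
      sum_part hk (fun i j => phiConv μ n m hm g h i (xm j))
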